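/- (Generalized Reflection Principle for systems with perfect recall.) Let ℛ be a (synchronous or asynchronous) system in which the agent has perfect recall, let Pr be a probability measure on ℛ with Pr({r'}) > 0 for every run r', let (r,0) be a point and m a time, and let K(r₁,m), …, K(r_k,m) be the distinct information sets of the form K(r',m) for r' ∈ ℛ(K(r,0)). Then for every set of runs S ⊆ ℛ, the agent's current conditional probability lies in the span of her possible future conditional probabilities: min_{1≤j≤k} Pr(S | ℛ(K(r_j,m))) ≤ Pr(S | ℛ(K(r,0))) ≤ max_{1≤j≤k} Pr(S | ℛ(K(r_j,m))). -/
import Mathlib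


open scoped Classical

namespace SBP

variable {L : Type*}

/-- A point: a run together with a time. -/
abbrev Point (L : Type*) := (ℕ → L) × ℕ

/-- The information set `K(r,m)`: all points `(r',m')` with `r' ∈ ℛ` and `r' m' = r m`. -/
def K (ℛ : Finset (ℕ → L)) (r : ℕ → L) (m : ℕ) : Set (Point L) :=
  {p | p.1 ∈ ℛ ∧ p.1 p.2 = r m}

/-- `ℛ(U)`: the runs of `ℛ` passing through some point of `U`. -/
noncomputable def runsOf (ℛ : Finset (ℕ → L)) (U : Set (Point L)) : Finset (ℕ → L) :=
  ℛ.filter fun r' => ∃ m', (r', m') ∈ U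

/-- A system is synchronous if indistinguishable points occur at the same time. -/
def Synchronous (ℛ : Finset (ℕ → L)) : Prop :=
  ∀ r ∈ ℛ, ∀ r' ∈ ℛ, ∀ m m' : ℕ, r m = r' m' → m = m'

/-- The local-state sequence of run `r` at time `m`:
`r 0, r 1, …, r m` with consecutive repetitions removed. -/
noncomputable def lseq (r : ℕ → L) (m : ℕ) : List L :=
  ((List.range (m + 1)).map r).destutter (· ≠ ·)

/-- Perfect recall: indistinguishable points have the same local-state sequence. -/
def PerfectRecall (ℛ : Finset (ℕ → L)) : Prop :=
  ∀ r ∈ ℛ, ∀ r' ∈ ℛ, ∀ m m' : ℕ, r m = r' m' → lseq r m = lseq r' m'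

/-- A run-based event: contains all points of a run or none of them. -/
def RunBased (U : Set (Point L)) : Prop :=
  ∀ (r' : ℕ → L) (k k' : ℕ), (r', k) ∈ U → (r', k') ∈ U

/-- The probability of a (finite) set of runs. -/
noncomputable def PrS (pr : (ℕ → L) → ℝ) (S : Finset (ℕ → L)) : ℝ := ∑ r ∈ S, pr r

/-- `n_{(r,m)}(r')`: the number of points of the information set `K(r,m)` lying on run `r'`. -/
noncomputable def npts (r : ℕ → L) (m : ℕ) (r' : ℕ → L) : ℕ :=
  Nat.card {k : ℕ | r' k = r m}

/-- The Elga probability of a single point, for the agent at the point `(r,m)`. -/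
noncomputable def elga (ℛ : Finset (ℕ → L)) (pr : (ℕ → L) → ℝ) (r : ℕ → L) (m : ℕ)
    (p : Point L) : ℝ :=
  if p ∈ K ℛ r m then
    pr p.1 / ∑ r'' ∈ runsOf ℛ (K ℛ r m), pr r'' * (npts r m r'' : ℝ)
  else 0

/-- Conditional probability of a set of runs `S` given a set of runs `T`. -/
noncomputable def condP (pr : (ℕ → L) → ℝ) (S T : Finset (ℕ → L)) : ℝ :=
  PrS pr (S ∩ T) / PrS pr T

private lemma destutter'_head? {R : L → L → Prop} [DecidableRel R] :
    ∀ (l : List L) (a : L), (l.destutter' R a).head? = some a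
  | [], a => by simp
  | b :: l, a => by
    rw [List.destutter'_cons]
    split
    · simp
    · exact destutter'_head? l a

private lemma destutter'_prefix {R : L → L → Prop} [DecidableRel R] :
    ∀ (l₁ l₂ : List L) (a : L), l₁ <+: l₂ → l₁.destutter' R a <+: l₂.destutter' R a
  | [], l₂, a, _ => by
    rw [List.destutter'_nil]
    cases h2 : l₂.destutter' R a with
    | nil => exact absurd h2 (List.destutter'_ne_nil l₂ R)
    | cons c t =>
      have h := destutter'_head? (R := R) l₂ a
      rw [h2] at h
      simp only [List.head?_cons, Option.some.injEq] at h
      subst h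
      exact ⟨t, rfl⟩
  | b :: l₁, l₂, a, h => by
    obtain ⟨t, rfl⟩ := h
    rw [List.cons_append, List.destutter'_cons, List.destutter'_cons]
    split
    · obtain ⟨w, hw⟩ := destutter'_prefix (R := R) l₁ (l₁ ++ t) b ⟨t, rfl⟩
      exact ⟨w, by rw [List.cons_append, hw]⟩
    · exact destutter'_prefix l₁ (l₁ ++ t) a ⟨t, rfl⟩

private lemma destutter'_ne_getLast? :
    ∀ (l : List L) (a : L), (l.destutter' (· ≠ ·) a).getLast? = (a :: l).getLast?
  | [], a => by simp
  | b :: l, a => by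
    rw [List.destutter'_cons]
    by_cases hab : a ≠ b
    · rw [if_pos hab]
      have h1 := destutter'_ne_getLast? l b
      cases h2 : l.destutter' (· ≠ ·) b with
      | nil => exact absurd h2 (List.destutter'_ne_nil l _)
      | cons c t =>
        rw [h2] at h1
        rw [List.getLast?_cons_cons, h1, List.getLast?_cons_cons]
    · rw [if_neg hab]
      push_neg at hab
      subst hab
      rw [destutter'_ne_getLast? l a]
      cases l with
      | nil => simp
      | cons c t => simp [List.getLast?_cons_cons]



private lemma lseq_eq (r : ℕ → L) (m : ℕ) :
    lseq r m = ((List.range m).map (fun i => r (i + 1))).destutter' (· ≠ ·) (r 0) := by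
  rw [lseq, List.range_succ_eq_map, List.map_cons, List.destutter_cons', List.map_map]
  rfl

private lemma lseq_ne_nil (r : ℕ → L) (m : ℕ) : lseq r m ≠ [] := by
  rw [lseq_eq]; exact List.destutter'_ne_nil _ _

private lemma lseq_head? (r : ℕ → L) (m : ℕ) : (lseq r m).head? = some (r 0) := by
  rw [lseq_eq]; exact destutter'_head? _ _

private lemma lseq_prefix (r : ℕ → L) {m m' : ℕ} (h : m ≤ m') : lseq r m <+: lseq r m' := by
  rw [lseq_eq, lseq_eq]
  refine destutter'_prefix _ _ _ (List.IsPrefix.map _ ?_)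
  obtain ⟨d, rfl⟩ := Nat.exists_eq_add_of_le h
  rw [List.range_add]
  exact ⟨_, rfl⟩

private lemma lseq_getLast? (r : ℕ → L) (m : ℕ) : (lseq r m).getLast? = some (r m) := by
  rw [lseq_eq, destutter'_ne_getLast?]
  have : r 0 :: (List.range m).map (fun i => r (i + 1)) = (List.range (m + 1)).map r := by
    rw [List.range_succ_eq_map, List.map_cons, List.map_map]; rfl
  rw [this, List.range_succ, List.map_append, List.map_singleton, List.getLast?_concat]

private lemma lseq_mem {r : ℕ → L} {m : ℕ} {x : L} (h : x ∈ lseq r m) : ∃ t, r t = x := by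
  rw [lseq] at h
  have := (List.destutter_sublist _ _).subset h
  obtain ⟨t, -, rfl⟩ := List.mem_map.1 this
  exact ⟨t, rfl⟩

private lemma mem_runsOf_K {ℛ : Finset (ℕ → L)} {r' ρ : ℕ → L} {n : ℕ} :
    r' ∈ runsOf ℛ (K ℛ ρ n) ↔ r' ∈ ℛ ∧ ∃ t, r' t = ρ n := by
  simp [runsOf, K]


private lemma nested {ℛ : Finset (ℕ → L)} (hrec : PerfectRecall ℛ)
    {r₁ r₂ : ℕ → L} (h₁ : r₁ ∈ ℛ) (h₂ : r₂ ∈ ℛ) {m₁ m₂ : ℕ}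
    (hpre : lseq r₁ m₁ <+: lseq r₂ m₂) :
    runsOf ℛ (K ℛ r₂ m₂) ⊆ runsOf ℛ (K ℛ r₁ m₁) := by
  intro x hx
  rw [mem_runsOf_K] at hx ⊢
  obtain ⟨hxR, s, hs⟩ := hx
  refine ⟨hxR, ?_⟩
  have hls : lseq x s = lseq r₂ m₂ := hrec x hxR r₂ h₂ s m₂ hs
  have hmem : r₁ m₁ ∈ lseq x s := by
    rw [hls]
    refine hpre.subset (List.mem_of_mem_getLast? ?_)
    rw [Option.mem_def, lseq_getLast?]
  exact lseq_mem hmem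

private lemma reflection_core (pr : (ℕ → L) → ℝ) (ℛ : Finset (ℕ → L))
    (hpos : ∀ x ∈ ℛ, 0 < pr x)
    (S T : Finset (ℕ → L)) (hTR : T ⊆ ℛ) (hTne : T.Nonempty)
    {k : ℕ} (Tj : Fin k → Finset (ℕ → L))
    (hsub : ∀ j, Tj j ⊆ T) (hne : ∀ j, (Tj j).Nonempty)
    (hcov : ∀ x ∈ T, ∃ j, x ∈ Tj j)
    (hlam : ∀ j j' x, x ∈ Tj j → x ∈ Tj j' → Tj j ⊆ Tj j' ∨ Tj j' ⊆ Tj j) :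
    (⨅ j, condP pr S (Tj j)) ≤ condP pr S T ∧
      condP pr S T ≤ ⨆ j, condP pr S (Tj j) := by
  classical
  have hpr0 : ∀ A : Finset (ℕ → L), A ⊆ ℛ → A.Nonempty → 0 < PrS pr A := by
    rintro A hAR ⟨x, hx⟩
    exact Finset.sum_pos' (fun y hy => (hpos y (hAR hy)).le) ⟨x, hx, hpos x (hAR hx)⟩
  have hTpos : 0 < PrS pr T := hpr0 T hTR hTne
  have hTjpos : ∀ j, 0 < PrS pr (Tj j) := fun j =>
    hpr0 _ ((hsub j).trans hTR) (hne j)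
  set I : Finset (Finset (ℕ → L)) := Finset.image Tj Finset.univ with hI
  set Pm : Finset (Finset (ℕ → L)) := I.filter (fun A => ∀ B ∈ I, A ⊆ B → A = B) with hP
  have hmaxabove : ∀ j : Fin k, ∃ A ∈ Pm, Tj j ⊆ A := by
    intro j
    obtain ⟨A, hA, hmax⟩ := Finset.exists_max_image (I.filter fun B => Tj j ⊆ B) Finset.card
      ⟨Tj j, Finset.mem_filter.mpr
        ⟨Finset.mem_image_of_mem _ (Finset.mem_univ j), Finset.Subset.refl _⟩⟩
    rw [Finset.mem_filter] at hA
    refine ⟨A, Finset.mem_filter.mpr ⟨hA.1, ?_⟩, hA.2⟩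
    intro B hB hAB
    exact Finset.eq_of_subset_of_card_le hAB
      (hmax B (Finset.mem_filter.mpr ⟨hB, hA.2.trans hAB⟩))
  have hPmem : ∀ A ∈ Pm, ∃ j, A = Tj j := by
    intro A hA
    obtain ⟨j, -, hj⟩ := Finset.mem_image.mp (Finset.mem_filter.mp hA).1
    exact ⟨j, hj.symm⟩
  have hcover : T = Pm.biUnion id := by
    apply Finset.Subset.antisymm
    · intro x hx
      obtain ⟨j, hj⟩ := hcov x hx
      obtain ⟨A, hA, hsubA⟩ := hmaxabove j
      exact Finset.mem_biUnion.mpr ⟨A, hA, hsubA hj⟩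
    · intro x hx
      obtain ⟨A, hA, hxA⟩ := Finset.mem_biUnion.mp hx
      obtain ⟨j, rfl⟩ := hPmem A hA
      exact hsub j hxA
  have hdisj : (↑Pm : Set (Finset (ℕ → L))).PairwiseDisjoint id := by
    intro A hA B hB hAB
    simp only [Function.onFun, id]
    rw [Finset.disjoint_left]
    intro x hxA hxB
    apply hAB
    rw [Finset.mem_coe] at hA hB
    obtain ⟨j, rfl⟩ := hPmem A hA
    obtain ⟨j', rfl⟩ := hPmem B hB
    rcases hlam j j' x hxA hxB with h | h
    · exact (Finset.mem_filter.mp hA).2 _ (Finset.mem_image_of_mem _ (Finset.mem_univ j')) h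
    · exact ((Finset.mem_filter.mp hB).2 _ (Finset.mem_image_of_mem _ (Finset.mem_univ j)) h).symm
  have hkey : ∀ A : Finset (ℕ → L), PrS pr (S ∩ A) = ∑ x ∈ A, if x ∈ S then pr x else 0 := by
    intro A
    rw [PrS, Finset.inter_comm, ← Finset.filter_mem_eq_inter, Finset.sum_filter]
  have hTsum : PrS pr T = ∑ A ∈ Pm, PrS pr A := by
    rw [hcover, PrS, Finset.sum_biUnion hdisj]
    rfl
  have hSTsum : PrS pr (S ∩ T) = ∑ A ∈ Pm, PrS pr (S ∩ A) := by
    rw [hkey, hcover, Finset.sum_biUnion hdisj]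
    exact Finset.sum_congr rfl fun A _ => (hkey A).symm
  have hmul : ∀ j, condP pr S (Tj j) * PrS pr (Tj j) = PrS pr (S ∩ Tj j) := by
    intro j
    rw [condP, div_mul_cancel₀ _ (hTjpos j).ne']
  constructor
  · rw [condP, le_div_iff₀ hTpos]
    calc (⨅ j, condP pr S (Tj j)) * PrS pr T
        = ∑ A ∈ Pm, (⨅ j, condP pr S (Tj j)) * PrS pr A := by rw [hTsum, Finset.mul_sum]
      _ ≤ ∑ A ∈ Pm, PrS pr (S ∩ A) := by
          refine Finset.sum_le_sum fun A hA => ?_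
          obtain ⟨j, rfl⟩ := hPmem A hA
          calc (⨅ j', condP pr S (Tj j')) * PrS pr (Tj j)
              ≤ condP pr S (Tj j) * PrS pr (Tj j) :=
                mul_le_mul_of_nonneg_right (ciInf_le (Finite.bddBelow_range _) j) (hTjpos j).le
            _ = PrS pr (S ∩ Tj j) := hmul j
      _ = PrS pr (S ∩ T) := hSTsum.symm
  · rw [condP, div_le_iff₀ hTpos]
    calc PrS pr (S ∩ T) = ∑ A ∈ Pm, PrS pr (S ∩ A) := hSTsum
      _ ≤ ∑ A ∈ Pm, (⨆ j, condP pr S (Tj j)) * PrS pr A := by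
          refine Finset.sum_le_sum fun A hA => ?_
          obtain ⟨j, rfl⟩ := hPmem A hA
          calc PrS pr (S ∩ Tj j) = condP pr S (Tj j) * PrS pr (Tj j) := (hmul j).symm
            _ ≤ (⨆ j', condP pr S (Tj j')) * PrS pr (Tj j) :=
                mul_le_mul_of_nonneg_right (le_ciSup (f := fun j' => condP pr S (Tj j')) (Finite.bddAbove_range _) j) (hTjpos j).le
      _ = (⨆ j, condP pr S (Tj j)) * PrS pr T := by rw [hTsum, Finset.mul_sum]

/-- Generalized Reflection Principle for systems with perfect recall: the current
conditional probability lies in the span of the possible later conditional probabilities. -/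
theorem generalized_reflection (ℛ : Finset (ℕ → L)) (hne : ℛ.Nonempty)
    (hrec : PerfectRecall ℛ)
    (pr : (ℕ → L) → ℝ) (hpos : ∀ r' ∈ ℛ, 0 < pr r') (hsum : ∑ r' ∈ ℛ, pr r' = 1)
    (r : ℕ → L) (hr : r ∈ ℛ) (m : ℕ)
    (k : ℕ) (rs : Fin k → ℕ → L)
    (hmem : ∀ j : Fin k, rs j ∈ runsOf ℛ (K ℛ r 0))
    (hdist : Function.Injective fun j : Fin k => K ℛ (rs j) m)
    (hall : ∀ r' ∈ runsOf ℛ (K ℛ r 0), ∃ j : Fin k, K ℛ r' m = K ℛ (rs j) m) :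
    ∀ S : Finset (ℕ → L), S ⊆ ℛ →
      (⨅ j : Fin k, condP pr S (runsOf ℛ (K ℛ (rs j) m))) ≤
          condP pr S (runsOf ℛ (K ℛ r 0)) ∧
      condP pr S (runsOf ℛ (K ℛ r 0)) ≤
          ⨆ j : Fin k, condP pr S (runsOf ℛ (K ℛ (rs j) m)) := by
  intro S hS
  have hrsR : ∀ j, rs j ∈ ℛ := fun j => (mem_runsOf_K.mp (hmem j)).1
  have hrs0 : ∀ j, rs j 0 = r 0 := by
    intro j
    obtain ⟨-, u, hu⟩ := mem_runsOf_K.mp (hmem j)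
    have he : lseq (rs j) u = lseq r 0 := hrec (rs j) (hrsR j) r hr u 0 hu
    have h0 : (lseq (rs j) u).head? = some (rs j 0) := lseq_head? _ _
    rw [he, lseq_head?] at h0
    exact (Option.some_injective _ h0).symm
  refine reflection_core pr ℛ hpos S (runsOf ℛ (K ℛ r 0)) (Finset.filter_subset _ _)
    ⟨r, mem_runsOf_K.mpr ⟨hr, 0, rfl⟩⟩ (fun j => runsOf ℛ (K ℛ (rs j) m)) ?_
    (fun j => ⟨rs j, mem_runsOf_K.mpr ⟨hrsR j, m, rfl⟩⟩) ?_ ?_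
  · intro j x hx
    obtain ⟨hxR, s, hs⟩ := mem_runsOf_K.mp hx
    have hls : lseq x s = lseq (rs j) m := hrec x hxR (rs j) (hrsR j) s m hs
    have h0 : (lseq x s).head? = some (x 0) := lseq_head? _ _
    rw [hls, lseq_head?] at h0
    exact mem_runsOf_K.mpr ⟨hxR, 0, (Option.some_injective _ h0).symm.trans (hrs0 j)⟩
  · intro x hx
    obtain ⟨j, hj⟩ := hall x hx
    have hxR : x ∈ ℛ := (mem_runsOf_K.mp hx).1
    have hK : (x, m) ∈ K ℛ (rs j) m := by rw [← hj]; exact ⟨hxR, rfl⟩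
    exact ⟨j, mem_runsOf_K.mpr ⟨hxR, m, hK.2⟩⟩
  · intro j j' x hx hx'
    obtain ⟨hxR, t₁, ht₁⟩ := mem_runsOf_K.mp hx
    obtain ⟨-, t₂, ht₂⟩ := mem_runsOf_K.mp hx'
    have e₁ : lseq x t₁ = lseq (rs j) m := hrec x hxR (rs j) (hrsR j) t₁ m ht₁
    have e₂ : lseq x t₂ = lseq (rs j') m := hrec x hxR (rs j') (hrsR j') t₂ m ht₂
    have p₁ : lseq (rs j) m <+: lseq x (max t₁ t₂) := e₁ ▸ lseq_prefix x (le_max_left t₁ t₂)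
    have p₂ : lseq (rs j') m <+: lseq x (max t₁ t₂) := e₂ ▸ lseq_prefix x (le_max_right t₁ t₂)
    rcases List.prefix_or_prefix_of_prefix p₁ p₂ with h | h
    · exact Or.inr (nested hrec (hrsR j) (hrsR j') h)
    · exact Or.inl (nested hrec (hrsR j') (hrsR j) h)

end SBP
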